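/- In the q-shuffle algebra V, for all k ∈ ℕ: x ⋆ G_k = W_{−k} + (1+q⁻²) Σ_{i=0}^{k−1} W_{i+1} x² G_{k−i−1}, where on the right-hand side juxtaposition denotes the free (concatenation) product in F⟨x,y⟩. -/

import Mathlib

noncomputable section

/-- Words in the letters `x` (= `false`) and `y` (= `true`). -/
abbrev Wd := List Bool

/-- The underlying vector space of the free algebra `F⟨x,y⟩`,
with the words as a basis. -/
abbrev V (F : Type*) [Field F] := Wd →₀ F

/-- The pairing `⟨u,v⟩` on letters: `2` if equal, `-2` if distinct. -/
def pr (a b : Bool) : ℤ := if a = b then 2 else -2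

/-- `⟨u₁,b⟩ + ⟨u₂,b⟩ + ⋯ + ⟨u_r,b⟩` for a word `u` and a letter `b`. -/
def wsum (u : Wd) (b : Bool) : ℤ := (u.map fun a => pr a b).sum

variable {F : Type*} [Field F]

/-- Left multiplication by a letter, in the free (concatenation) algebra. -/
def lmul (a : Bool) (f : V F) : V F := Finsupp.mapDomain (fun w => a :: w) f

/-- The `q`-shuffle product of two words (as an element of `V F`), defined by
Rosso's recursion
`u ⋆ v = u₁((u₂⋯u_r) ⋆ v) + q^{⟨u₁,v₁⟩+⋯+⟨u_r,v₁⟩} v₁(u ⋆ (v₂⋯v_s))`. -/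
def sh (q : F) : Wd → Wd → V F
  | [], v => Finsupp.single v 1
  | u@(_ :: _), [] => Finsupp.single u 1
  | a :: u', b :: v' =>
      lmul a (sh q u' (b :: v')) +
        q ^ wsum (a :: u') b • lmul b (sh q (a :: u') v')
  termination_by u v => u.length + v.length
  decreasing_by all_goals (simp only [List.length_cons]; omega)

/-- The `q`-shuffle product on `V F`, extended bilinearly from words. -/
def st (q : F) (f g : V F) : V F :=
  f.sum fun u cu => g.sum fun v cv => (cu * cv) • sh q u v

/-- The concatenation (free-algebra) product on `V F`. -/
def cm (f g : V F) : V F :=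
  f.sum fun u cu => g.sum fun v cv => Finsupp.single (u ++ v) (cu * cv)

/-- Powers with respect to the concatenation product. -/
def cpow (f : V F) : ℕ → V F
  | 0 => Finsupp.single [] 1
  | n + 1 => cm f (cpow f n)

/-- The alternating word `W_{-k} = xyx⋯x` of length `2k+1`. -/
def altX : ℕ → Wd
  | 0 => [false]
  | k + 1 => false :: true :: altX k

/-- The alternating word `W_{k+1} = yxy⋯y` of length `2k+1`. -/
def altY : ℕ → Wd
  | 0 => [true]
  | k + 1 => true :: false :: altY k

/-- The alternating word `G_k = (yx)^k`. -/
def gw : ℕ → Wd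
  | 0 => []
  | k + 1 => true :: false :: gw k

/-- The alternating word `G̃_k = (xy)^k`. -/
def gtw : ℕ → Wd
  | 0 => []
  | k + 1 => false :: true :: gtw k

/-- `W_{-k}` as an element of `V F`. -/
def Wm (F : Type*) [Field F] (k : ℕ) : V F := Finsupp.single (altX k) 1

/-- `W_{k+1}` as an element of `V F`. -/
def Wp (F : Type*) [Field F] (k : ℕ) : V F := Finsupp.single (altY k) 1

/-- `G_k` as an element of `V F`. -/
def Gn (F : Type*) [Field F] (k : ℕ) : V F := Finsupp.single (gw k) 1

/-- `G̃_k` as an element of `V F`. -/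
def Gt (F : Type*) [Field F] (k : ℕ) : V F := Finsupp.single (gtw k) 1

/-- `x ⋆ G_k = W_{−k} + (1+q⁻²) Σ_{i=0}^{k−1} W_{i+1} x² G_{k−i−1}`,
where the summands on the right are concatenated words. -/

lemma lmul_single (a : Bool) (w : Wd) (c : F) :
    lmul a (Finsupp.single w c) = Finsupp.single (a :: w) c := by
  simp [lmul, Finsupp.mapDomain_single]

lemma lmul_add (a : Bool) (f g : V F) : lmul a (f + g) = lmul a f + lmul a g := by
  simp [lmul, Finsupp.mapDomain_add]

lemma lmul_smul (a : Bool) (c : F) (f : V F) : lmul a (c • f) = c • lmul a f := by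
  simp [lmul, Finsupp.mapDomain_smul]

lemma lmul_sum (a : Bool) {s : Finset ℕ} (f : ℕ → V F) :
    lmul a (∑ i ∈ s, f i) = ∑ i ∈ s, lmul a (f i) := by
  classical
  induction s using Finset.induction with
  | empty => simp [lmul]
  | insert _ _ h ih => rw [Finset.sum_insert h, Finset.sum_insert h, lmul_add, ih]

lemma st_single_single (q : F) (u v : Wd) :
    st q (Finsupp.single u (1 : F)) (Finsupp.single v 1) = sh q u v := by
  unfold st
  rw [Finsupp.sum_single_index, Finsupp.sum_single_index] <;> simp

lemma cons_gw (k : ℕ) : false :: gw k = altX k := by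
  induction k with
  | zero => rfl
  | succ k ih => simp [gw, altX, ← ih]

lemma wsum_ft : wsum [false] true = -2 := by decide
lemma wsum_ff : wsum [false] false = 2 := by decide

lemma key (q : F) (hq : q ≠ 0) (k : ℕ) :
    sh q [false] (gw k)
      = Finsupp.single (altX k) 1 + (1 + (q⁻¹) ^ 2) •
          ∑ i ∈ Finset.range k,
            Finsupp.single (altY i ++ [false, false] ++ gw (k - i - 1)) (1 : F) := by
  induction k with
  | zero => simp [gw, altX, sh]
  | succ k ih =>
    have h2 : q ^ (-2 : ℤ) = (q⁻¹) ^ 2 := by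
      rw [zpow_neg, inv_pow, ← zpow_natCast]
      norm_num
    have h1 : q ^ (-2 : ℤ) * q ^ (2 : ℤ) = 1 := by
      rw [← zpow_add₀ hq]; norm_num
    show sh q [false] (true :: false :: gw k) = _
    rw [sh, sh, sh, sh, wsum_ft, wsum_ff, ih]
    simp only [lmul_add, lmul_smul, lmul_sum, lmul_single]
    rw [Finset.sum_range_succ']
    have hsh : ∀ i, altY (i + 1) ++ [false, false] ++ gw (k + 1 - (i + 1) - 1)
        = true :: false :: (altY i ++ [false, false] ++ gw (k - i - 1)) := by
      intro i
      have h : k + 1 - (i + 1) - 1 = k - i - 1 := by omega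
      simp [altY, h]
    simp only [hsh]
    have hb2 : (true :: false :: false :: gw k : Wd)
        = altY 0 ++ [false, false] ++ gw (k + 1 - 0 - 1) := by
      simp [altY]
    have hfa : (false :: altX k : Wd) = false :: false :: gw k := by
      rw [cons_gw]
    have hax : (false :: true :: false :: gw k : Wd) = altX (k + 1) := by
      simp [altX, cons_gw]
    rw [hfa, hb2, hax]
    rw [smul_add, smul_smul, h1, h2, one_smul]
    simp only [smul_add, add_smul, one_smul]
    abel

theorem stmt_7 {F : Type*} [Field F] (q : F) (hq : q ≠ 0)
    (hq' : ∀ n : ℕ, 0 < n → q ^ n ≠ 1) (k : ℕ) :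
    st q (Wm F 0) (Gn F k)
      = Wm F k + (1 + (q⁻¹) ^ 2) •
          ∑ i ∈ Finset.range k,
            Finsupp.single (altY i ++ [false, false] ++ gw (k - i - 1)) (1 : F) := by
  have : Wm F 0 = Finsupp.single [false] (1:F) := rfl
  rw [this, Gn, st_single_single]
  show sh q [false] (gw k) = _
  rw [key q hq k]
  rfl
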